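/- Let K ⊆ ℝ have 0 as an accumulation point, and let (μ_t)_{t∈K} and (ν_t)_{t∈K} be families of linear functionals on ℂ[X] with μ_t(1) = ν_t(1) = 1, such that there exist linear functionals μ^{(0)},...,μ^{(k)} and ν^{(0)},...,ν^{(k)} on ℂ[X] with μ_t(P) = Σ_{i=0}^k (t^i/i!) μ^{(i)}(P) + o(t^k) and ν_t(P) = Σ_{i=0}^k (t^i/i!) ν^{(i)}(P) + o(t^k) as t → 0 along K, for every P ∈ ℂ[X]. Then there exist linear functionals η^{(0)}, ..., η^{(k)} on ℂ[X] such that (μ_t ⊞ ν_t)(P) = Σ_{i=0}^k (t^i/i!) η^{(i)}(P) + o(t^k) for every P ∈ ℂ[X] as t → 0 along K; moreover, for every n ≥ 1 and 0 ≤ i ≤ k, the infinitesimal non-crossing cumulants satisfy κ_n^{(i)}[η](X,...,X) = κ_n^{(i)}[μ](X,...,X) + κ_n^{(i)}[ν](X,...,X), where κ_n^{(i)}[μ] denotes the infinitesimal non-crossing cumulant functionals of (ℂ[X], (μ^{(i)})_{0≤i≤k}), and similarly for ν and η. (Thus the derivatives at 0 of μ_t ⊞ ν_t exist up to order k and are given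 by the infinitesimal free additive convolution of order k of the derivatives of μ_t and ν_t.) -/

import Mathlib

open scoped BigOperators
attribute [local instance] Classical.propDecidable

/-- A (set) partition of a type `X`: nonempty blocks, every point in a unique block. -/
def IsPartition {X : Type*} (P : Finset (Finset X)) : Prop :=
  (∀ B ∈ P, B.Nonempty) ∧ ∀ x : X, ∃! B, B ∈ P ∧ x ∈ B

/-- Non-crossing collection of blocks in a linear order. -/
def IsNonCrossing {X : Type*} [LinearOrder X] (P : Finset (Finset X)) : Prop :=
  ∀ a b c d : X, a < b → b < c → c < d →
    (∃ B ∈ P, a ∈ B ∧ c ∈ B) → (∃ B ∈ P, b ∈ B ∧ d ∈ B) →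
    ∃ B ∈ P, a ∈ B ∧ b ∈ B

/-- The finset `NC(n)` of non-crossing partitions of `[n]` (modelled on `Fin n`). -/
noncomputable def ncFinset (n : ℕ) : Finset (Finset (Finset (Fin n))) :=
  Finset.univ.filter fun P => IsPartition P ∧ IsNonCrossing P

/-- The subtuple `(a_1,…,a_n)|V` of the entries indexed by `V`, in increasing order. -/
noncomputable def restrictTuple {A : Type*} {n : ℕ} (a : Fin n → A) (V : Finset (Fin n)) :
    Fin V.card → A :=
  fun i => a (V.orderIsoOfFin rfl i).1

/-- The defining (infinitesimal) moment-cumulant formula: the family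
`(κ^{(i)}_n)_{n ≥ 1, 0 ≤ i ≤ k}` of multilinear functionals (indexed by `ℕ`, only the
indices `i ≤ k` being relevant) is the family of infinitesimal non-crossing cumulant
functionals of `(A, (φ^{(i)})_{0 ≤ i ≤ k})`:
`Σ_{p ∈ NC(n)} Σ_{f : p → ℕ, Σ f = i} (i!/∏_V f(V)!) ∏_{V∈p} κ^{(f(V))}_{|V|}((a)|V)
  = φ^{(i)}(a_1⋯a_n)`. -/
def InfCumFormula (k : ℕ) {A : Type*} [Ring A] [Algebra ℂ A]
    (φ : ℕ → (A →ₗ[ℂ] ℂ))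
    (κ : ℕ → (n : ℕ) → MultilinearMap ℂ (fun _ : Fin n => A) ℂ) : Prop :=
  ∀ i ≤ k, ∀ (n : ℕ), 1 ≤ n → ∀ a : Fin n → A,
    ∑ p ∈ ncFinset n,
      ∑ f ∈ (Fintype.piFinset fun _ : {V // V ∈ p} => Finset.range (i + 1)) |>.filter
          (fun f => ∑ V, f V = i),
        ((i.factorial : ℂ) / ∏ V, ((f V).factorial : ℂ)) *
          ∏ V : {V // V ∈ p}, κ (f V) V.1.card (restrictTuple a V.1)
    = φ i (List.ofFn a).prod

/-- `h(t) = o(t^k)` as `t → 0` along `K`: `h(t)/t^k → 0` as `t → 0`, `t ∈ K`. -/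
def IsLittleOtk (k : ℕ) (K : Set ℝ) (h : ℝ → ℂ) : Prop :=
  Filter.Tendsto (fun t : ℝ => h t / (t : ℂ) ^ k) (nhdsWithin 0 (K \ {0})) (nhds 0)

/-- `c` is the free cumulant sequence of the functional `ρ` on `ℂ[X]` with `ρ(1) = 1`:
`Σ_{p ∈ NC(n)} ∏_{V ∈ p} c_{|V|} = ρ(X^n)` for all `n ≥ 1`. -/
def IsCumulantSeq (ρ : Polynomial ℂ →ₗ[ℂ] ℂ) (c : ℕ → ℂ) : Prop :=
  ∀ n : ℕ, 1 ≤ n → ∑ p ∈ ncFinset n, ∏ V ∈ p, c V.card = ρ (Polynomial.X ^ n)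

/-- `ξ` is the free additive convolution `μ ⊞ ν`: `ξ(1) = 1` and the free cumulants
of `ξ` are the sums of those of `μ` and `ν`. -/
def IsFreeConv (μ ν ξ : Polynomial ℂ →ₗ[ℂ] ℂ) : Prop :=
  ξ 1 = 1 ∧ ∀ cμ cν cξ : ℕ → ℂ, IsCumulantSeq μ cμ → IsCumulantSeq ν cν →
    IsCumulantSeq ξ cξ → ∀ n : ℕ, 1 ≤ n → cξ n = cμ n + cν n


open PowerSeries Polynomial Filter

lemma singleton_univ_mem_ncFinset {n : ℕ} (hn : 1 ≤ n) :
    ({Finset.univ} : Finset (Finset (Fin n))) ∈ ncFinset n := by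
  have : NeZero n := ⟨by omega⟩
  refine Finset.mem_filter.2 ⟨Finset.mem_univ _, ⟨?_, ?_⟩, ?_⟩
  · intro B hB
    rw [Finset.mem_singleton] at hB
    subst hB
    exact Finset.univ_nonempty
  · intro x
    exact ⟨Finset.univ, ⟨Finset.mem_singleton_self _, Finset.mem_univ _⟩,
      fun B hB => Finset.mem_singleton.1 hB.1⟩
  · intro a b c d _ _ _ _ _
    exact ⟨Finset.univ, Finset.mem_singleton_self _, Finset.mem_univ _, Finset.mem_univ _⟩

lemma block_card_pos {n : ℕ} {p : Finset (Finset (Fin n))} (hp : p ∈ ncFinset n)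
    {V : Finset (Fin n)} (hV : V ∈ p) : 1 ≤ V.card := by
  have := (Finset.mem_filter.1 hp).2.1.1 V hV
  exact Finset.card_pos.2 this

lemma block_card_lt {n : ℕ} {p : Finset (Finset (Fin n))} (hp : p ∈ ncFinset n)
    (hne : p ≠ {Finset.univ}) {V : Finset (Fin n)} (hV : V ∈ p) : V.card < n := by
  have hpart : IsPartition p := (Finset.mem_filter.1 hp).2.1
  have hle : V.card ≤ n := by
    simpa using Finset.card_le_univ V
  rcases lt_or_eq_of_le hle with h | h
  · exact h
  · exfalso
    have hVuniv : V = Finset.univ := Finset.eq_univ_of_card V (by simpa using h)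
    subst hVuniv
    apply hne
    ext B
    simp only [Finset.mem_singleton]
    constructor
    · intro hB
      obtain ⟨x, hx⟩ := hpart.1 B hB
      obtain ⟨C, _, hCuniq⟩ := hpart.2 x
      have h1 := hCuniq B ⟨hB, hx⟩
      have h2 := hCuniq Finset.univ ⟨hV, Finset.mem_univ _⟩
      rw [h1, h2]
    · rintro rfl; exact hV

noncomputable def cumOf {S : Type*} [CommRing S] (m : ℕ → S) : ℕ → S
  | n => m n - ∑ p ∈ ((ncFinset n).erase {Finset.univ}).attach,
      ∏ V ∈ p.1.attach, cumOf m V.1.card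
  decreasing_by
    exact block_card_lt (Finset.mem_of_mem_erase p.2) (Finset.ne_of_mem_erase p.2) V.2

lemma cumOf_def {S : Type*} [CommRing S] (m : ℕ → S) (n : ℕ) :
    cumOf m n = m n - ∑ p ∈ ((ncFinset n).erase {Finset.univ}),
      ∏ V ∈ p, cumOf m V.card := by
  rw [cumOf]
  congr 1
  rw [← Finset.sum_attach ((ncFinset n).erase {Finset.univ})
    (fun p => ∏ V ∈ p, cumOf m V.card)]
  refine Finset.sum_congr rfl fun p _ => ?_
  exact Finset.prod_attach p.1 fun V => cumOf m V.card

lemma cumOf_spec {S : Type*} [CommRing S] (m : ℕ → S) {n : ℕ} (hn : 1 ≤ n) :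
    ∑ p ∈ ncFinset n, ∏ V ∈ p, cumOf m V.card = m n := by
  rw [← Finset.add_sum_erase _ _ (singleton_univ_mem_ncFinset hn)]
  rw [Finset.prod_singleton]
  simp only [Finset.card_univ, Fintype.card_fin]
  rw [cumOf_def]
  ring

lemma cumOf_unique {S : Type*} [CommRing S] (m : ℕ → S) (c : ℕ → S)
    (h : ∀ n, 1 ≤ n → ∑ p ∈ ncFinset n, ∏ V ∈ p, c V.card = m n) :
    ∀ n, 1 ≤ n → c n = cumOf m n := by
  intro n
  induction n using Nat.strong_induction_on with
  | _ n ih =>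
    intro hn
    have h1 := h n hn
    rw [← Finset.add_sum_erase _ _ (singleton_univ_mem_ncFinset hn),
      Finset.prod_singleton] at h1
    simp only [Finset.card_univ, Fintype.card_fin] at h1
    have h2 : ∑ p ∈ ((ncFinset n).erase {Finset.univ}), ∏ V ∈ p, c V.card
        = ∑ p ∈ ((ncFinset n).erase {Finset.univ}), ∏ V ∈ p, cumOf m V.card := by
      refine Finset.sum_congr rfl fun p hp => Finset.prod_congr rfl fun V hV => ?_
      have hpnc := Finset.mem_of_mem_erase hp
      exact ih V.card (block_card_lt hpnc (Finset.ne_of_mem_erase hp) hV)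
        (block_card_pos hpnc hV)
    rw [cumOf_def]
    rw [h2] at h1
    linear_combination h1

lemma coeff_prod' {ι : Type*} [Fintype ι] (g : ι → PowerSeries ℂ) (i : ℕ) :
    PowerSeries.coeff i (∏ j, g j) =
      ∑ f ∈ (Fintype.piFinset fun _ : ι => Finset.range (i + 1)) |>.filter
          (fun f => ∑ j, f j = i),
        ∏ j, PowerSeries.coeff (f j) (g j) := by
  classical
  rw [PowerSeries.coeff_prod g i Finset.univ]
  refine Finset.sum_nbij' (fun l => ⇑l) (fun f => Finsupp.equivFunOnFinite.symm f) ?_ ?_ ?_ ?_ ?_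
  · intro l hl
    rw [Finset.mem_finsuppAntidiag] at hl
    refine Finset.mem_filter.2 ⟨Fintype.mem_piFinset.2 fun j => ?_, hl.1⟩
    rw [Finset.mem_range, Nat.lt_succ_iff, ← hl.1]
    exact Finset.single_le_sum (fun _ _ => Nat.zero_le _) (Finset.mem_univ j)
  · intro f hf
    rw [Finset.mem_finsuppAntidiag]
    refine ⟨?_, Finset.subset_univ _⟩
    have := (Finset.mem_filter.1 hf).2
    simpa using this
  · intro l _
    exact Finsupp.equivFunOnFinite_symm_coe l
  · intro f _
    rfl
  · intro l _
    rfl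

lemma coeff_prod_congr {ι : Type*} [Fintype ι] (F G : ι → PowerSeries ℂ) (i : ℕ)
    (h : ∀ V : ι, ∀ j ≤ i, PowerSeries.coeff j (F V) = PowerSeries.coeff j (G V)) :
    PowerSeries.coeff i (∏ V, F V) = PowerSeries.coeff i (∏ V, G V) := by
  rw [coeff_prod', coeff_prod']
  refine Finset.sum_congr rfl fun f hf => Finset.prod_congr rfl fun V _ => ?_
  have hsum := (Finset.mem_filter.1 hf).2
  refine h V (f V) ?_
  rw [← hsum]
  exact Finset.single_le_sum (fun _ _ => Nat.zero_le _) (Finset.mem_univ V)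


noncomputable def Kser (κ : ℕ → (n : ℕ) → MultilinearMap ℂ (fun _ : Fin n => Polynomial ℂ) ℂ)
    (n : ℕ) : PowerSeries ℂ :=
  PowerSeries.mk fun j => κ j n (fun _ => Polynomial.X) / j.factorial

noncomputable def Mser (φ : ℕ → (Polynomial ℂ →ₗ[ℂ] ℂ)) (n : ℕ) : PowerSeries ℂ :=
  PowerSeries.mk fun j => φ j (Polynomial.X ^ n) / j.factorial

lemma prod_card_eq {n : ℕ} (p : Finset (Finset (Fin n))) (F : ℕ → PowerSeries ℂ) :
    ∏ V ∈ p, F V.card = ∏ V : {V // V ∈ p}, F V.1.card := by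
  rw [Finset.univ_eq_attach]
  exact (Finset.prod_attach p fun V => F V.card).symm

lemma infCum_coeff {k : ℕ} (φ : ℕ → (Polynomial ℂ →ₗ[ℂ] ℂ))
    (κ : ℕ → (n : ℕ) → MultilinearMap ℂ (fun _ : Fin n => Polynomial ℂ) ℂ)
    (hκ : InfCumFormula k φ κ) {i : ℕ} (hi : i ≤ k) {n : ℕ} (hn : 1 ≤ n) :
    PowerSeries.coeff i (∑ p ∈ ncFinset n, ∏ V ∈ p, Kser κ V.card)
      = φ i (Polynomial.X ^ n) / i.factorial := by
  have hf := hκ i hi n hn (fun _ => Polynomial.X)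
  rw [List.ofFn_const, List.prod_replicate] at hf
  have hfac : (i.factorial : ℂ) ≠ 0 := Nat.cast_ne_zero.2 (Nat.factorial_ne_zero i)
  calc PowerSeries.coeff i (∑ p ∈ ncFinset n, ∏ V ∈ p, Kser κ V.card)
      = ∑ p ∈ ncFinset n,
          ∑ f ∈ (Fintype.piFinset fun _ : {V // V ∈ p} => Finset.range (i + 1)) |>.filter
            (fun f => ∑ V, f V = i),
          (∏ V : {V // V ∈ p}, κ (f V) V.1.card (fun _ => Polynomial.X)) /
            (∏ V : {V // V ∈ p}, ((f V).factorial : ℂ)) := by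
        rw [map_sum]
        refine Finset.sum_congr rfl fun p _ => ?_
        rw [prod_card_eq, coeff_prod']
        refine Finset.sum_congr ?_ fun f _ => ?_
        · congr!
        rw [← Finset.prod_div_distrib]
        refine Finset.prod_congr rfl fun V _ => ?_
        simp [Kser]
    _ = (∑ p ∈ ncFinset n,
          ∑ f ∈ (Fintype.piFinset fun _ : {V // V ∈ p} => Finset.range (i + 1)) |>.filter
            (fun f => ∑ V, f V = i),
          ((i.factorial : ℂ) / ∏ V, ((f V).factorial : ℂ)) *
            ∏ V : {V // V ∈ p}, κ (f V) V.1.card (fun _ => Polynomial.X)) / i.factorial := by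
        rw [Finset.sum_div]
        refine Finset.sum_congr rfl fun p _ => ?_
        rw [Finset.sum_div]
        refine Finset.sum_congr ?_ fun f _ => ?_
        · congr!
        · have hF : (∏ V : {V // V ∈ p}, ((f V).factorial : ℂ)) ≠ 0 :=
            Finset.prod_ne_zero_iff.2 fun V _ => Nat.cast_ne_zero.2 (Nat.factorial_ne_zero _)
          field_simp
    _ = φ i (Polynomial.X ^ n) / i.factorial := by
        exact congrArg (fun z => z / (i.factorial : ℂ)) hf

lemma infCum_eq_cumOf {k : ℕ} (φ : ℕ → (Polynomial ℂ →ₗ[ℂ] ℂ))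
    (κ : ℕ → (n : ℕ) → MultilinearMap ℂ (fun _ : Fin n => Polynomial ℂ) ℂ)
    (hκ : InfCumFormula k φ κ) :
    ∀ n, 1 ≤ n → ∀ i ≤ k,
      PowerSeries.coeff i (Kser κ n) = PowerSeries.coeff i (cumOf (Mser φ) n) := by
  intro n
  induction n using Nat.strong_induction_on with
  | _ n ih =>
    intro hn i hi
    have h1 : PowerSeries.coeff i (∑ p ∈ ncFinset n, ∏ V ∈ p, Kser κ V.card)
        = PowerSeries.coeff i (Mser φ n) := by
      rw [infCum_coeff φ κ hκ hi hn]
      simp [Mser]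
    rw [← Finset.add_sum_erase _ _ (singleton_univ_mem_ncFinset hn),
      Finset.prod_singleton] at h1
    simp only [Finset.card_univ, Fintype.card_fin] at h1
    rw [map_add, map_sum] at h1
    have h2 : ∀ p ∈ (ncFinset n).erase {Finset.univ},
        PowerSeries.coeff i (∏ V ∈ p, Kser κ V.card)
          = PowerSeries.coeff i (∏ V ∈ p, cumOf (Mser φ) V.card) := by
      intro p hp
      rw [prod_card_eq, prod_card_eq]
      refine coeff_prod_congr _ _ i fun V j hj => ?_
      exact ih V.1.card
        (block_card_lt (Finset.mem_of_mem_erase hp) (Finset.ne_of_mem_erase hp) V.2)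
        (block_card_pos (Finset.mem_of_mem_erase hp) V.2) j (le_trans hj hi)
    rw [Finset.sum_congr rfl h2] at h1
    rw [cumOf_def (Mser φ) n, map_sub, map_sum]
    linear_combination h1

/-! ### Asymptotic expansion machinery -/

noncomputable def lK (K : Set ℝ) : Filter ℝ := nhdsWithin 0 (K \ {0})

def Exp (k : ℕ) (K : Set ℝ) (g : ℝ → ℂ) (F : PowerSeries ℂ) : Prop :=
  IsLittleOtk k K fun t =>
    g t - ∑ i ∈ Finset.range (k + 1), (t : ℂ) ^ i * PowerSeries.coeff i F

lemma ev_ne (K : Set ℝ) : ∀ᶠ t : ℝ in lK K, (t : ℂ) ≠ 0 := by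
  have : K \ {0} ∈ lK K := self_mem_nhdsWithin
  filter_upwards [this] with t ht
  simp only [ne_eq, Complex.ofReal_eq_zero]
  exact ht.2

lemma tendsto_coe (K : Set ℝ) : Filter.Tendsto (fun t : ℝ => (t : ℂ)) (lK K) (nhds 0) := by
  have h : Filter.Tendsto (fun t : ℝ => (t : ℂ)) (nhds 0) (nhds ((0 : ℝ) : ℂ)) :=
    Complex.continuous_ofReal.tendsto 0
  simpa [lK] using h.mono_left nhdsWithin_le_nhds

lemma exp_iff {k : ℕ} {K : Set ℝ} {g : ℝ → ℂ} {F : PowerSeries ℂ} :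
    Exp k K g F ↔
      (fun t : ℝ => g t - ∑ i ∈ Finset.range (k + 1), (t : ℂ) ^ i * PowerSeries.coeff i F)
        =o[lK K] (fun t : ℝ => (t : ℂ) ^ k) := by
  rw [Exp, IsLittleOtk]
  exact (Asymptotics.isLittleO_iff_tendsto'
    (by filter_upwards [ev_ne K] with t ht h; exact absurd h (pow_ne_zero k ht))).symm

lemma Exp.zero {k : ℕ} {K : Set ℝ} : Exp k K (fun _ => 0) 0 := by
  rw [Exp, IsLittleOtk]
  have h : (fun t : ℝ => ((0 : ℂ) -
      ∑ i ∈ Finset.range (k + 1), (t : ℂ) ^ i * PowerSeries.coeff i 0) / (t : ℂ) ^ k)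
      = fun _ => 0 := by
    funext t; simp
  exact h ▸ tendsto_const_nhds

lemma Exp.congr {k : ℕ} {K : Set ℝ} {g g' : ℝ → ℂ} {F : PowerSeries ℂ}
    (h : Exp k K g F) (hgg' : ∀ t ∈ K \ {0}, g t = g' t) : Exp k K g' F := by
  rw [Exp, IsLittleOtk] at h ⊢
  refine Filter.Tendsto.congr' ?_ h
  filter_upwards [self_mem_nhdsWithin] with t ht
  rw [hgg' t ht]

lemma Exp.const {k : ℕ} {K : Set ℝ} (c : ℂ) : Exp k K (fun _ => c) (PowerSeries.C c) := by
  rw [Exp, IsLittleOtk]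
  have h0 : ∀ t : ℝ,
      ∑ i ∈ Finset.range (k + 1), (t : ℂ) ^ i * PowerSeries.coeff i (PowerSeries.C c)
        = c := by
    intro t
    rw [Finset.sum_eq_single 0 (fun b _ hb => by simp [PowerSeries.coeff_C, hb])
      (fun h => absurd (Finset.mem_range.2 k.succ_pos) h)]
    simp
  have h : (fun t : ℝ => (c -
      ∑ i ∈ Finset.range (k + 1), (t : ℂ) ^ i * PowerSeries.coeff i (PowerSeries.C c))
        / (t : ℂ) ^ k) = fun _ => 0 := by
    funext t; rw [h0 t, sub_self, zero_div]
  exact h ▸ tendsto_const_nhds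

lemma Exp.add {k : ℕ} {K : Set ℝ} {g h : ℝ → ℂ} {F G : PowerSeries ℂ}
    (h1 : Exp k K g F) (h2 : Exp k K h G) : Exp k K (fun t => g t + h t) (F + G) := by
  rw [exp_iff] at h1 h2 ⊢
  refine (h1.add h2).congr' (Filter.Eventually.of_forall fun t => ?_) Filter.EventuallyEq.rfl
  simp only [map_add, mul_add, Finset.sum_add_distrib]
  ring

lemma Exp.smul {k : ℕ} {K : Set ℝ} {g : ℝ → ℂ} {F : PowerSeries ℂ}
    (c : ℂ) (h : Exp k K g F) : Exp k K (fun t => c * g t) (c • F) := by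
  rw [exp_iff] at h ⊢
  refine (h.const_mul_left c).congr' (Filter.Eventually.of_forall fun t => ?_)
    Filter.EventuallyEq.rfl
  simp only [map_smul, smul_eq_mul, mul_sub, Finset.mul_sum]
  congr 1
  exact Finset.sum_congr rfl fun i _ => by ring

lemma Exp.sum {k : ℕ} {K : Set ℝ} {ι : Type*} (s : Finset ι) (g : ι → ℝ → ℂ)
    (F : ι → PowerSeries ℂ) (h : ∀ j ∈ s, Exp k K (g j) (F j)) :
    Exp k K (fun t => ∑ j ∈ s, g j t) (∑ j ∈ s, F j) := by
  classical
  induction s using Finset.cons_induction with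
  | empty => simpa using (Exp.zero : Exp k K (fun _ => 0) 0)
  | cons a s ha ih =>
    simp only [Finset.sum_cons]
    exact Exp.add (h a (Finset.mem_cons_self a s))
      (ih fun j hj => h j (Finset.mem_cons_of_mem hj))

lemma sum_range_antidiag {M : Type*} [AddCommMonoid M] (N : ℕ) (f : ℕ → ℕ → M) :
    ∑ m ∈ Finset.range N, ∑ x ∈ Finset.HasAntidiagonal.antidiagonal m, f x.1 x.2
      = ∑ q ∈ (Finset.range N ×ˢ Finset.range N).filter (fun q => q.1 + q.2 < N),
          f q.1 q.2 := by
  rw [Finset.sum_sigma']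
  refine Finset.sum_nbij' (fun x => (x.2.1, x.2.2)) (fun q => ⟨q.1 + q.2, q⟩) ?_ ?_ ?_ ?_ ?_
  · rintro ⟨m, u, v⟩ hx
    obtain ⟨h1, h2⟩ := Finset.mem_sigma.1 hx
    rw [Finset.HasAntidiagonal.mem_antidiagonal] at h2
    rw [Finset.mem_range] at h1
    have h2' : u + v = m := h2
    have h1' : m < N := h1
    refine Finset.mem_filter.2
      ⟨Finset.mem_product.2 ⟨Finset.mem_range.2 ?_, Finset.mem_range.2 ?_⟩, ?_⟩
    · show u < N; omega
    · show v < N; omega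
    · show u + v < N; omega
  · rintro ⟨u, v⟩ hq
    obtain ⟨hmem, hlt⟩ := Finset.mem_filter.1 hq
    refine Finset.mem_sigma.2 ⟨Finset.mem_range.2 hlt, ?_⟩
    simp [Finset.HasAntidiagonal.mem_antidiagonal]
  · rintro ⟨m, u, v⟩ hx
    obtain ⟨h1, h2⟩ := Finset.mem_sigma.1 hx
    rw [Finset.HasAntidiagonal.mem_antidiagonal] at h2
    simp only at h2 ⊢
    subst h2
    rfl
  · rintro ⟨u, v⟩ _
    rfl
  · rintro ⟨m, u, v⟩ _
    rfl

lemma Exp.mul {k : ℕ} {K : Set ℝ} {g h : ℝ → ℂ} {F G : PowerSeries ℂ}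
    (h1 : Exp k K g F) (h2 : Exp k K h G) : Exp k K (fun t => g t * h t) (F * G) := by
  classical
  set a : ℕ → ℂ := fun i => PowerSeries.coeff i F with ha
  set b : ℕ → ℂ := fun i => PowerSeries.coeff i G with hb
  set A : ℝ → ℂ := fun t => ∑ i ∈ Finset.range (k + 1), (t : ℂ) ^ i * a i with hA
  set B : ℝ → ℂ := fun t => ∑ i ∈ Finset.range (k + 1), (t : ℂ) ^ i * b i with hB
  set Cc : ℝ → ℂ := fun t =>
    ∑ i ∈ Finset.range (k + 1), (t : ℂ) ^ i * PowerSeries.coeff i (F * G) with hCc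
  rw [exp_iff] at h1 h2 ⊢
  have hAt : Filter.Tendsto A (lK K)
      (nhds (∑ i ∈ Finset.range (k + 1), (0 : ℂ) ^ i * a i)) :=
    tendsto_finset_sum _ fun i _ => ((tendsto_coe K).pow i).mul_const _
  have hBt : Filter.Tendsto B (lK K)
      (nhds (∑ i ∈ Finset.range (k + 1), (0 : ℂ) ^ i * b i)) :=
    tendsto_finset_sum _ fun i _ => ((tendsto_coe K).pow i).mul_const _
  have hAO : A =O[lK K] (fun _ => (1 : ℂ)) := hAt.isBigO_one ℂ
  have htk : Filter.Tendsto (fun t : ℝ => (t : ℂ) ^ k) (lK K) (nhds ((0 : ℂ) ^ k)) :=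
    (tendsto_coe K).pow k
  have hhB : Filter.Tendsto (fun t => h t - B t) (lK K) (nhds 0) := by
    rw [← Asymptotics.isLittleO_one_iff ℂ]
    exact h2.trans_isBigO (htk.isBigO_one ℂ)
  have hht : Filter.Tendsto h (lK K)
      (nhds (0 + ∑ i ∈ Finset.range (k + 1), (0 : ℂ) ^ i * b i)) := by
    have := hhB.add hBt
    exact this.congr fun t => by ring
  have hhO : h =O[lK K] (fun _ => (1 : ℂ)) := hht.isBigO_one ℂ
  have p1 : (fun t => (g t - A t) * h t) =o[lK K] fun t : ℝ => (t : ℂ) ^ k := by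
    have := h1.mul_isBigO hhO
    simpa using this
  have p2 : (fun t => A t * (h t - B t)) =o[lK K] fun t : ℝ => (t : ℂ) ^ k := by
    have := hAO.mul_isLittleO h2
    simpa using this
  have hid : ∀ t : ℝ, A t * B t - Cc t =
      ∑ q ∈ (Finset.range (k + 1) ×ˢ Finset.range (k + 1)).filter
        (fun q => ¬ q.1 + q.2 < k + 1), (t : ℂ) ^ (q.1 + q.2) * (a q.1 * b q.2) := by
    intro t
    have e1 : A t * B t = ∑ q ∈ Finset.range (k + 1) ×ˢ Finset.range (k + 1),
        (t : ℂ) ^ (q.1 + q.2) * (a q.1 * b q.2) := by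
      rw [hA, hB]
      rw [Finset.sum_mul_sum, Finset.sum_product]
      exact Finset.sum_congr rfl fun i _ => Finset.sum_congr rfl fun j _ => by
        rw [pow_add]; ring
    have e2 : Cc t = ∑ q ∈ (Finset.range (k + 1) ×ˢ Finset.range (k + 1)).filter
        (fun q => q.1 + q.2 < k + 1), (t : ℂ) ^ (q.1 + q.2) * (a q.1 * b q.2) := by
      rw [hCc]
      rw [← sum_range_antidiag (k + 1) (fun u v => (t : ℂ) ^ (u + v) * (a u * b v))]
      refine Finset.sum_congr rfl fun m hm => ?_
      rw [PowerSeries.coeff_mul, Finset.mul_sum]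
      refine Finset.sum_congr rfl fun x hx => ?_
      rw [Finset.HasAntidiagonal.mem_antidiagonal] at hx
      rw [hx]
    rw [e1, e2, ← Finset.sum_filter_add_sum_filter_not
      (Finset.range (k + 1) ×ˢ Finset.range (k + 1)) (fun q => q.1 + q.2 < k + 1)
      (fun q => (t : ℂ) ^ (q.1 + q.2) * (a q.1 * b q.2))]
    exact add_sub_cancel_left _ _
  have p3 : (fun t => A t * B t - Cc t) =o[lK K] fun t : ℝ => (t : ℂ) ^ k := by
    have hfun : (fun t => A t * B t - Cc t) = fun t : ℝ =>
        ∑ q ∈ (Finset.range (k + 1) ×ˢ Finset.range (k + 1)).filter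
          (fun q => ¬ q.1 + q.2 < k + 1), (t : ℂ) ^ (q.1 + q.2) * (a q.1 * b q.2) :=
      funext hid
    rw [hfun]
    refine Asymptotics.IsLittleO.fun_sum fun q hq => ?_
    obtain ⟨hqmem, hqgt⟩ := Finset.mem_filter.1 hq
    have he : q.1 + q.2 = k + (q.1 + q.2 - k) := by omega
    have hfun2 : (fun t : ℝ => (t : ℂ) ^ (q.1 + q.2) * (a q.1 * b q.2)) = fun t : ℝ =>
        (t : ℂ) ^ k * ((t : ℂ) ^ (q.1 + q.2 - k) * (a q.1 * b q.2)) := by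
      funext t
      conv_lhs => rw [he]
      rw [pow_add]
      ring
    rw [hfun2]
    have hsmall : Filter.Tendsto
        (fun t : ℝ => (t : ℂ) ^ (q.1 + q.2 - k) * (a q.1 * b q.2)) (lK K) (nhds 0) := by
      have := ((tendsto_coe K).pow (q.1 + q.2 - k)).mul_const (a q.1 * b q.2)
      rwa [zero_pow (by omega : q.1 + q.2 - k ≠ 0), zero_mul] at this
    have := (Asymptotics.isBigO_refl (fun t : ℝ => (t : ℂ) ^ k) (lK K)).mul_isLittleO
      ((Asymptotics.isLittleO_one_iff ℂ).2 hsmall)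
    simpa using this
  have := (p1.add p2).add p3
  refine this.congr' (Filter.Eventually.of_forall fun t => ?_) Filter.EventuallyEq.rfl
  show (g t - A t) * h t + A t * (h t - B t) + (A t * B t - Cc t) = g t * h t - Cc t
  ring

lemma Exp.prod {k : ℕ} {K : Set ℝ} {ι : Type*} (s : Finset ι) (g : ι → ℝ → ℂ)
    (F : ι → PowerSeries ℂ) (h : ∀ j ∈ s, Exp k K (g j) (F j)) :
    Exp k K (fun t => ∏ j ∈ s, g j t) (∏ j ∈ s, F j) := by
  classical
  induction s using Finset.cons_induction with
  | empty =>
    simp only [Finset.prod_empty]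
    have := Exp.const (k := k) (K := K) 1
    simpa using this
  | cons a s ha ih =>
    simp only [Finset.prod_cons]
    exact Exp.mul (h a (Finset.mem_cons_self a s))
      (ih fun j hj => h j (Finset.mem_cons_of_mem hj))

lemma poly_small {K : Set ℝ} (hK : (lK K).NeBot) :
    ∀ (m : ℕ) (d : ℕ → ℂ),
      Filter.Tendsto (fun t : ℝ =>
        (∑ i ∈ Finset.range (m + 1), (t : ℂ) ^ i * d i) / (t : ℂ) ^ m) (lK K) (nhds 0) →
      ∀ i ≤ m, d i = 0 := by
  intro m
  induction m with
  | zero =>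
    intro d h i hi
    interval_cases i
    have heq : (fun t : ℝ =>
        (∑ i ∈ Finset.range 1, (t : ℂ) ^ i * d i) / (t : ℂ) ^ 0) = fun _ => d 0 := by
      funext t; simp
    rw [heq] at h
    exact tendsto_nhds_unique tendsto_const_nhds h
  | succ m ih =>
    intro d h i hi
    have hnum : Filter.Tendsto (fun t : ℝ =>
        ∑ i ∈ Finset.range (m + 2), (t : ℂ) ^ i * d i) (lK K) (nhds 0) := by
      have h2 := h.mul ((tendsto_coe K).pow (m + 1))
      rw [zero_mul] at h2
      refine Filter.Tendsto.congr' ?_ h2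
      filter_upwards [ev_ne K] with t ht
      field_simp
    have hnum' : Filter.Tendsto (fun t : ℝ =>
        ∑ i ∈ Finset.range (m + 2), (t : ℂ) ^ i * d i) (lK K)
        (nhds (∑ i ∈ Finset.range (m + 2), (0 : ℂ) ^ i * d i)) :=
      tendsto_finset_sum _ fun i _ => ((tendsto_coe K).pow i).mul_const _
    have hsum0 : ∑ i ∈ Finset.range (m + 2), (0 : ℂ) ^ i * d i = 0 :=
      tendsto_nhds_unique hnum' hnum
    have hd0 : d 0 = 0 := by
      rw [Finset.sum_eq_single 0 (fun b _ hb => by rw [zero_pow hb, zero_mul])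
        (fun hh => absurd (Finset.mem_range.2 (Nat.succ_pos _)) hh)] at hsum0
      simpa using hsum0
    rcases Nat.eq_zero_or_pos i with rfl | hipos
    · exact hd0
    · have key : Filter.Tendsto (fun t : ℝ =>
          (∑ j ∈ Finset.range (m + 1), (t : ℂ) ^ j * d (j + 1)) / (t : ℂ) ^ m)
          (lK K) (nhds 0) := by
        refine Filter.Tendsto.congr' ?_ h
        filter_upwards [ev_ne K] with t ht
        rw [Finset.sum_range_succ' (fun i => (t : ℂ) ^ i * d i) (m + 1)]
        rw [hd0]
        have hfac : ∑ i ∈ Finset.range (m + 1), (t : ℂ) ^ (i + 1) * d (i + 1)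
            = (t : ℂ) * ∑ j ∈ Finset.range (m + 1), (t : ℂ) ^ j * d (j + 1) := by
          rw [Finset.mul_sum]
          exact Finset.sum_congr rfl fun j _ => by rw [pow_succ]; ring
        rw [hfac]
        rw [pow_succ ((t : ℂ)) m]
        rw [mul_zero, add_zero]
        rw [mul_comm ((t : ℂ) ^ m) (t : ℂ), mul_div_mul_left _ _ ht]
      have hlast := ih (fun j => d (j + 1)) key (i - 1) (by omega)
      have hi1 : i - 1 + 1 = i := by omega
      rwa [hi1] at hlast

lemma Exp.unique {k : ℕ} {K : Set ℝ} (hK : (lK K).NeBot) {g : ℝ → ℂ} {F G : PowerSeries ℂ}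
    (h1 : Exp k K g F) (h2 : Exp k K g G) :
    ∀ i ≤ k, PowerSeries.coeff i F = PowerSeries.coeff i G := by
  rw [Exp, IsLittleOtk] at h1 h2
  have hsub := h1.sub h2
  rw [sub_zero] at hsub
  have heq : Filter.Tendsto (fun t : ℝ =>
      (∑ i ∈ Finset.range (k + 1), (t : ℂ) ^ i *
        (PowerSeries.coeff i G - PowerSeries.coeff i F)) / (t : ℂ) ^ k)
      (lK K) (nhds 0) := by
    refine Filter.Tendsto.congr (fun t => ?_) hsub
    rw [div_sub_div_same]
    congr 1
    simp only [mul_sub, Finset.sum_sub_distrib]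
    ring
  intro i hi
  have := poly_small hK k _ heq i hi
  linear_combination -this

lemma Exp_unique' {k : ℕ} {K : Set ℝ} (hK : (lK K).NeBot) {g : ℝ → ℂ} {F G : PowerSeries ℂ}
    (h1 : Exp k K g F) (h2 : Exp k K g G) :
    ∀ i ≤ k, PowerSeries.coeff i F = PowerSeries.coeff i G :=
  Exp.unique hK h1 h2

lemma Exp.sub {k : ℕ} {K : Set ℝ} {g h : ℝ → ℂ} {F G : PowerSeries ℂ}
    (h1 : Exp k K g F) (h2 : Exp k K h G) : Exp k K (fun t => g t - h t) (F - G) := by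
  have e : F - G = F + (-1 : ℂ) • G := by rw [neg_one_smul, ← sub_eq_add_neg]
  rw [e]
  exact (Exp.add h1 (Exp.smul (-1) h2)).congr fun t _ => by ring

lemma exp_of_hyp {k : ℕ} {K : Set ℝ} (ρ : ℝ → (Polynomial ℂ →ₗ[ℂ] ℂ))
    (ρ' : ℕ → (Polynomial ℂ →ₗ[ℂ] ℂ))
    (h : ∀ P : Polynomial ℂ, IsLittleOtk k K fun t =>
      ρ t P - ∑ i ∈ Finset.range (k + 1), (t : ℂ) ^ i / (i.factorial : ℂ) * ρ' i P)
    (P : Polynomial ℂ) :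
    Exp k K (fun t => ρ t P) (PowerSeries.mk fun i => ρ' i P / i.factorial) := by
  rw [Exp, IsLittleOtk]
  have e : ∀ t : ℝ,
      (∑ i ∈ Finset.range (k + 1), (t : ℂ) ^ i / (i.factorial : ℂ) * ρ' i P)
        = ∑ i ∈ Finset.range (k + 1),
            (t : ℂ) ^ i * PowerSeries.coeff i (PowerSeries.mk fun i => ρ' i P / i.factorial) :=
    fun t => Finset.sum_congr rfl fun i _ => by
      rw [PowerSeries.coeff_mk, div_mul_eq_mul_div, mul_div_assoc]
  refine Filter.Tendsto.congr (fun t => ?_) (h P)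
  show ((ρ t) P - ∑ i ∈ Finset.range (k + 1), (t:ℂ) ^ i / (i.factorial : ℂ) * (ρ' i) P) / (t:ℂ) ^ k = _
  rw [e t]

lemma exp_cumOf {k : ℕ} {K : Set ℝ} (m : ℝ → ℕ → ℂ) (M : ℕ → PowerSeries ℂ)
    (hexp : ∀ n, 1 ≤ n → Exp k K (fun t => m t n) (M n)) :
    ∀ n, 1 ≤ n → Exp k K (fun t => cumOf (m t) n) (cumOf M n) := by
  intro n
  induction n using Nat.strong_induction_on with
  | _ n ih =>
    intro hn
    have hfun : (fun t => cumOf (m t) n) = fun t => m t n -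
        ∑ p ∈ ((ncFinset n).erase {Finset.univ}), ∏ V ∈ p, cumOf (m t) V.card :=
      funext fun t => cumOf_def (m t) n
    rw [hfun, cumOf_def M n]
    refine Exp.sub (hexp n hn) ?_
    refine Exp.sum _ _ _ fun p hp => ?_
    refine Exp.prod _ _ _ fun V hV => ?_
    exact ih V.card
      (block_card_lt (Finset.mem_of_mem_erase hp) (Finset.ne_of_mem_erase hp) hV)
      (block_card_pos (Finset.mem_of_mem_erase hp) hV)

noncomputable def Wmap (v : ℕ → PowerSeries ℂ) : Polynomial ℂ →ₗ[ℂ] PowerSeries ℂ where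
  toFun P := P.sum fun n a => a • v n
  map_add' p q := Polynomial.sum_add_index p q _ (fun i => zero_smul ℂ (v i))
    (fun a b₁ b₂ => add_smul b₁ b₂ (v a))
  map_smul' c p := by
    simp only [RingHom.id_apply]
    rw [Polynomial.sum_smul_index p c _ (fun i => zero_smul ℂ (v i)),
      Polynomial.sum_def, Polynomial.sum_def, Finset.smul_sum]
    exact Finset.sum_congr rfl fun n _ => mul_smul c _ (v n)

noncomputable def etaSeries (μ' ν' : ℕ → (Polynomial ℂ →ₗ[ℂ] ℂ)) (n : ℕ) : PowerSeries ℂ :=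
  ∑ p ∈ ncFinset n, ∏ V ∈ p, (cumOf (Mser μ') V.card + cumOf (Mser ν') V.card)

noncomputable def vFun (μ' ν' : ℕ → (Polynomial ℂ →ₗ[ℂ] ℂ)) (n : ℕ) : PowerSeries ℂ :=
  if n = 0 then 1 else etaSeries μ' ν' n

noncomputable def etaFun (μ' ν' : ℕ → (Polynomial ℂ →ₗ[ℂ] ℂ)) (i : ℕ) :
    Polynomial ℂ →ₗ[ℂ] ℂ :=
  (i.factorial : ℂ) • ((PowerSeries.coeff i).comp (Wmap (vFun μ' ν')))

lemma Wmap_X_pow (v : ℕ → PowerSeries ℂ) (m : ℕ) :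
    Wmap v (Polynomial.X ^ m) = v m := by
  show (Polynomial.X ^ m : Polynomial ℂ).sum (fun n a => a • v n) = v m
  rw [Polynomial.X_pow_eq_monomial, Polynomial.sum_monomial_index 1 _ (zero_smul ℂ (v m)),
    one_smul]

lemma Mser_eta (μ' ν' : ℕ → (Polynomial ℂ →ₗ[ℂ] ℂ)) :
    ∀ m, 1 ≤ m → Mser (etaFun μ' ν') m = etaSeries μ' ν' m := by
  intro m hm
  apply PowerSeries.ext
  intro j
  have hfac : ((j.factorial : ℂ)) ≠ 0 := Nat.cast_ne_zero.2 (Nat.factorial_ne_zero j)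
  show PowerSeries.coeff j (PowerSeries.mk fun i => etaFun μ' ν' i (Polynomial.X ^ m) / i.factorial)
    = PowerSeries.coeff j (etaSeries μ' ν' m)
  rw [PowerSeries.coeff_mk]
  have : etaFun μ' ν' j (Polynomial.X ^ m)
      = (j.factorial : ℂ) * PowerSeries.coeff j (etaSeries μ' ν' m) := by
    show (j.factorial : ℂ) • (PowerSeries.coeff j) (Wmap (vFun μ' ν') (Polynomial.X ^ m))
      = _
    rw [Wmap_X_pow, vFun, if_neg (by omega : ¬ m = 0), smul_eq_mul]
  rw [this, mul_div_cancel_left₀ _ hfac]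

lemma cum_eta (μ' ν' : ℕ → (Polynomial ℂ →ₗ[ℂ] ℂ)) :
    ∀ m, 1 ≤ m → cumOf (Mser (etaFun μ' ν')) m
      = cumOf (Mser μ') m + cumOf (Mser ν') m := by
  have h := cumOf_unique (Mser (etaFun μ' ν'))
    (fun m => cumOf (Mser μ') m + cumOf (Mser ν') m)
    (fun m hm => by rw [Mser_eta μ' ν' m hm]; rfl)
  exact fun m hm => (h m hm).symm

/-- **Statement 18.** If `(μ_t)` and `(ν_t)` admit expansions
`μ_t = Σ_{i≤k} (t^i/i!) μ^{(i)} + o(t^k)`, `ν_t = Σ_{i≤k} (t^i/i!) ν^{(i)} + o(t^k)`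
along `K` (with `0` an accumulation point of `K`), then the free convolutions
`μ_t ⊞ ν_t` admit an expansion `Σ_{i≤k} (t^i/i!) η^{(i)} + o(t^k)`, and the
infinitesimal non-crossing cumulants of `(η^{(i)})` are the sums of those of
`(μ^{(i)})` and `(ν^{(i)})`. -/
theorem stmt18 (k : ℕ) (K : Set ℝ) (hK : (nhdsWithin (0 : ℝ) (K \ {0})).NeBot)
    (μ ν : ℝ → (Polynomial ℂ →ₗ[ℂ] ℂ))
    (hμ1 : ∀ t ∈ K, μ t 1 = 1) (hν1 : ∀ t ∈ K, ν t 1 = 1)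
    (μ' ν' : ℕ → (Polynomial ℂ →ₗ[ℂ] ℂ))
    (hμexp : ∀ P : Polynomial ℂ, IsLittleOtk k K fun t =>
      μ t P - ∑ i ∈ Finset.range (k + 1), (t : ℂ) ^ i / (i.factorial : ℂ) * μ' i P)
    (hνexp : ∀ P : Polynomial ℂ, IsLittleOtk k K fun t =>
      ν t P - ∑ i ∈ Finset.range (k + 1), (t : ℂ) ^ i / (i.factorial : ℂ) * ν' i P)
    (conv : ℝ → (Polynomial ℂ →ₗ[ℂ] ℂ))
    (hconv : ∀ t ∈ K, IsFreeConv (μ t) (ν t) (conv t)) :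
    ∃ η : ℕ → (Polynomial ℂ →ₗ[ℂ] ℂ),
      (∀ P : Polynomial ℂ, IsLittleOtk k K fun t =>
        conv t P - ∑ i ∈ Finset.range (k + 1), (t : ℂ) ^ i / (i.factorial : ℂ) * η i P) ∧
      ∀ (κμ κν κη : ℕ → (n : ℕ) → MultilinearMap ℂ (fun _ : Fin n => Polynomial ℂ) ℂ),
        InfCumFormula k μ' κμ → InfCumFormula k ν' κν → InfCumFormula k η κη →
        ∀ (n : ℕ), 1 ≤ n → ∀ i ≤ k,
          κη i n (fun _ => Polynomial.X) =
            κμ i n (fun _ => Polynomial.X) + κν i n (fun _ => Polynomial.X) := by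
  classical
  have hexpμ : ∀ n : ℕ, 1 ≤ n → Exp k K (fun t => μ t (Polynomial.X ^ n)) (Mser μ' n) :=
    fun n _ => exp_of_hyp μ μ' hμexp (Polynomial.X ^ n)
  have hexpν : ∀ n : ℕ, 1 ≤ n → Exp k K (fun t => ν t (Polynomial.X ^ n)) (Mser ν' n) :=
    fun n _ => exp_of_hyp ν ν' hνexp (Polynomial.X ^ n)
  have hcumμ := exp_cumOf (fun t n => μ t (Polynomial.X ^ n)) (Mser μ') hexpμ
  have hcumν := exp_cumOf (fun t n => ν t (Polynomial.X ^ n)) (Mser ν') hexpν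
  have hXn : ∀ n : ℕ, Exp k K (fun t => conv t (Polynomial.X ^ n)) (vFun μ' ν' n) := by
    intro n
    rcases Nat.eq_zero_or_pos n with rfl | hn
    · have h1 : Exp k K (fun _ => (1 : ℂ)) (vFun μ' ν' 0) := by
        rw [vFun, if_pos rfl, ← map_one PowerSeries.C]
        exact Exp.const 1
      refine h1.congr fun t ht => ?_
      rw [pow_zero]
      exact ((hconv t ht.1).1).symm
    · have hbase : Exp k K
          (fun t => ∑ p ∈ ncFinset n, ∏ V ∈ p,
            (cumOf (fun m => μ t (Polynomial.X ^ m)) V.card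
              + cumOf (fun m => ν t (Polynomial.X ^ m)) V.card))
          (etaSeries μ' ν' n) := by
        refine Exp.sum _ _ _ fun p hp => ?_
        refine Exp.prod _ _ _ fun V hV => ?_
        have hc := block_card_pos hp hV
        exact Exp.add (hcumμ V.card hc) (hcumν V.card hc)
      have hv : vFun μ' ν' n = etaSeries μ' ν' n := if_neg (by omega)
      rw [hv]
      refine hbase.congr fun t ht => ?_
      obtain ⟨hconv1, hconv2⟩ := hconv t ht.1
      have hcμ : IsCumulantSeq (μ t) (cumOf fun m => μ t (Polynomial.X ^ m)) :=
        fun m hm => cumOf_spec _ hm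
      have hcν : IsCumulantSeq (ν t) (cumOf fun m => ν t (Polynomial.X ^ m)) :=
        fun m hm => cumOf_spec _ hm
      have hcξ : IsCumulantSeq (conv t) (cumOf fun m => conv t (Polynomial.X ^ m)) :=
        fun m hm => cumOf_spec _ hm
      have hadd := hconv2 _ _ _ hcμ hcν hcξ
      have e1 : conv t (Polynomial.X ^ n)
          = ∑ p ∈ ncFinset n, ∏ V ∈ p,
              cumOf (fun m => conv t (Polynomial.X ^ m)) V.card :=
        (cumOf_spec (fun m => conv t (Polynomial.X ^ m)) hn).symm
      rw [e1]
      refine Finset.sum_congr rfl fun p hp => Finset.prod_congr rfl fun V hV => ?_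
      exact (hadd V.card (block_card_pos hp hV)).symm
  refine ⟨etaFun μ' ν', ?_, ?_⟩
  · intro P
    have hP : Exp k K (fun t => conv t P) (Wmap (vFun μ' ν') P) := by
      have hdecomp : ∀ t : ℝ,
          conv t P = ∑ n ∈ P.support, P.coeff n * conv t (Polynomial.X ^ n) := by
        intro t
        conv_lhs => rw [← Polynomial.sum_C_mul_X_pow_eq P]
        rw [Polynomial.sum_def, map_sum]
        refine Finset.sum_congr rfl fun n _ => ?_
        rw [← Polynomial.smul_eq_C_mul, map_smul, smul_eq_mul]
      have hsum : Exp k K (fun t => ∑ n ∈ P.support, P.coeff n * conv t (Polynomial.X ^ n))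
          (∑ n ∈ P.support, P.coeff n • vFun μ' ν' n) :=
        Exp.sum _ _ _ fun n _ => Exp.smul _ (hXn n)
      have hW : Wmap (vFun μ' ν') P = ∑ n ∈ P.support, P.coeff n • vFun μ' ν' n := by
        show P.sum (fun n a => a • vFun μ' ν' n) = _
        rw [Polynomial.sum_def]
      rw [hW]
      exact hsum.congr fun t _ => (hdecomp t).symm
    rw [IsLittleOtk]
    rw [Exp, IsLittleOtk] at hP
    refine Filter.Tendsto.congr (fun t => ?_) hP
    congr 1
    congr 1
    refine Finset.sum_congr rfl fun i _ => ?_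
    have hfac : ((i.factorial : ℂ)) ≠ 0 := Nat.cast_ne_zero.2 (Nat.factorial_ne_zero i)
    have hval : etaFun μ' ν' i P
        = (i.factorial : ℂ) * PowerSeries.coeff i (Wmap (vFun μ' ν') P) := rfl
    rw [hval, div_mul_eq_mul_div, mul_div_assoc, mul_div_cancel_left₀ _ hfac]
  · intro κμ κν κη hκμ hκν hκη n hn i hik
    have hfac : ((i.factorial : ℂ)) ≠ 0 := Nat.cast_ne_zero.2 (Nat.factorial_ne_zero i)
    have h1 := infCum_eq_cumOf (etaFun μ' ν') κη hκη n hn i hik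
    have h2 := infCum_eq_cumOf μ' κμ hκμ n hn i hik
    have h3 := infCum_eq_cumOf ν' κν hκν n hn i hik
    have h4 : PowerSeries.coeff i (cumOf (Mser (etaFun μ' ν')) n)
        = PowerSeries.coeff i (cumOf (Mser μ') n)
          + PowerSeries.coeff i (cumOf (Mser ν') n) := by
      rw [cum_eta μ' ν' n hn, map_add]
    have e1 : ∀ κ : ℕ → (n : ℕ) → MultilinearMap ℂ (fun _ : Fin n => Polynomial ℂ) ℂ,
        PowerSeries.coeff i (Kser κ n) = κ i n (fun _ => Polynomial.X) / i.factorial :=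
      fun κ => by simp only [Kser, PowerSeries.coeff_mk]
    have hdiv : κη i n (fun _ => Polynomial.X) / (i.factorial : ℂ)
        = κμ i n (fun _ => Polynomial.X) / i.factorial
          + κν i n (fun _ => Polynomial.X) / i.factorial := by
      rw [← e1 κη, ← e1 κμ, ← e1 κν, h1, h2, h3, h4]
    rw [← add_div, div_eq_div_iff hfac hfac] at hdiv
    exact mul_right_cancel₀ hfac hdiv
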